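/- Let n be an even positive integer, let C be the cycle graph on n vertices, and let s, t be two vertices at distance n/2 in C (diametrically opposite). Any deterministic algorithm A that, on input a graph, outputs an edge set forming a shortest s–t path (when one exists) satisfies: the expectation over a uniformly random edge e of C of the Hamming distance between A(C) and A(C − e) is at least n/4. -/
import Mathlib


/-- On the even cycle with `s,t` diametrically opposite, any deterministic
algorithm outputting a shortest `s`-`t` path has average sensitivity at least `n/4`.
Here `E = P ∪ Q` is the edge set of the cycle, `P` and `Q` are the two edge-disjoint
shortest `s`-`t` paths (each of length `n/2`), `A` is the algorithm (a map from edge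
sets to edge sets), which on the cycle outputs one of the two shortest paths, and on
the cycle minus an edge outputs the unique shortest path avoiding that edge. -/
theorem stmt1 {α : Type*} [DecidableEq α] (n : ℕ) (hn : 0 < n) (hne : Even n)
    (E P Q : Finset α) (A : Finset α → Finset α)
    (hPQdisj : Disjoint P Q) (hPQunion : P ∪ Q = E)
    (hPcard : P.card = n / 2) (hQcard : Q.card = n / 2)
    (hAC : A E = P ∨ A E = Q)
    (hAP : ∀ e ∈ P, A (E.erase e) = Q)
    (hAQ : ∀ e ∈ Q, A (E.erase e) = P) :
    (n : ℝ) / 4 ≤ (∑ e ∈ E, ((symmDiff (A E) (A (E.erase e))).card : ℝ)) / (E.card : ℝ) := by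
  subst hPQunion
  obtain ⟨k, hk⟩ := hne
  have hk2 : n = 2 * k := by omega
  have hEcard : (P ∪ Q).card = n := by
    rw [Finset.card_union_of_disjoint hPQdisj, hPcard, hQcard]; omega
  have hsdPQ : (symmDiff P Q).card = n := by
    rw [hPQdisj.symmDiff_eq_sup]; exact hEcard
  have hsdQP : (symmDiff Q P).card = n := by rw [symmDiff_comm]; exact hsdPQ
  have hkpos : 0 < k := by omega
  have hsum : (∑ e ∈ P ∪ Q, ((symmDiff (A (P ∪ Q)) (A ((P ∪ Q).erase e))).card : ℝ)) = k * n := by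
    rw [Finset.sum_union hPQdisj]
    rcases hAC with h | h
    · have h1 : ∀ e ∈ P, ((symmDiff (A (P ∪ Q)) (A ((P ∪ Q).erase e))).card : ℝ) = n := by
        intro e he; rw [h, hAP e he, hsdPQ]
      have h2 : ∀ e ∈ Q, ((symmDiff (A (P ∪ Q)) (A ((P ∪ Q).erase e))).card : ℝ) = 0 := by
        intro e he; rw [h, hAQ e he, symmDiff_self]; simp
      rw [Finset.sum_congr rfl h1, Finset.sum_congr rfl h2, Finset.sum_const,
        Finset.sum_const, hPcard, hk2, Nat.mul_div_cancel_left k (by norm_num : 0 < 2)]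
      simp [hk2]
    · have h1 : ∀ e ∈ P, ((symmDiff (A (P ∪ Q)) (A ((P ∪ Q).erase e))).card : ℝ) = 0 := by
        intro e he; rw [h, hAP e he, symmDiff_self]; simp
      have h2 : ∀ e ∈ Q, ((symmDiff (A (P ∪ Q)) (A ((P ∪ Q).erase e))).card : ℝ) = n := by
        intro e he; rw [h, hAQ e he, hsdQP]
      rw [Finset.sum_congr rfl h1, Finset.sum_congr rfl h2, Finset.sum_const,
        Finset.sum_const, hQcard, hk2, Nat.mul_div_cancel_left k (by norm_num : 0 < 2)]
      simp [hk2]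
  rw [hsum, hEcard]
  rw [div_le_div_iff₀ (by norm_num) (by positivity)]
  have : (n : ℝ) = 2 * k := by exact_mod_cast hk2
  rw [this]
  nlinarith [hkpos, (by exact_mod_cast hkpos : (0:ℝ) < k)]
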